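/- The function f(I,x) defined on {(I,x) : I ≥ 0, x ≥ 0} by f(I,x) = -I·U((1 - a·e^{-b·x·γ/I})·r) for I > 0 and f(I,x) = 0 for I = 0 is jointly convex in (I,x), where a ∈ (0,1], b > 0, r > 0, γ > 0 are constants and U : ℝ → ℝ is twice differentiable, concave, and nondecreasing. -/

import Mathlib

lemma aux_hd (a c r : ℝ) (t : ℝ) :
    HasDerivAt (fun t : ℝ => (1 - a * Real.exp (-(c * t))) * r)
      (a * c * Real.exp (-(c * t)) * r) t := by
  have h1 : HasDerivAt (fun t : ℝ => -(c * t)) (-c) t := by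
    simpa [Pi.neg_def] using ((hasDerivAt_id t).const_mul c).neg
  have h4 := (((h1.exp).const_mul a).const_sub 1).mul_const r
  refine h4.congr_deriv ?_
  ring

lemma aux_g_convex (a c r : ℝ) (ha : 0 < a) (hc : 0 < c) (hr : 0 < r)
    (U : ℝ → ℝ) (hUdiff : Differentiable ℝ U) (hUdiff2 : Differentiable ℝ (deriv U))
    (hU' : ∀ x, 0 ≤ deriv U x) (hU'' : ∀ x, deriv (deriv U) x ≤ 0) :
    ConvexOn ℝ Set.univ (fun t : ℝ => -(U ((1 - a * Real.exp (-(c * t))) * r))) := by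
  set h : ℝ → ℝ := fun t => (1 - a * Real.exp (-(c * t))) * r with hhdef
  set k : ℝ → ℝ := fun t => a * c * Real.exp (-(c * t)) * r with hkdef
  have hkpos : ∀ t, 0 < k t := fun t => by
    have := Real.exp_pos (-(c * t)); positivity
  have hg1 : ∀ t, HasDerivAt (fun t : ℝ => -(U (h t))) (-(deriv U (h t) * k t)) t := by
    intro t
    exact (((hUdiff (h t)).hasDerivAt).comp t (aux_hd a c r t)).neg
  have hderiv1 : deriv (fun t : ℝ => -(U (h t))) = fun t => -(deriv U (h t) * k t) := by
    funext t; exact (hg1 t).deriv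
  have hkd : ∀ t, HasDerivAt k (-(c * k t)) t := by
    intro t
    have h1 : HasDerivAt (fun t : ℝ => -(c * t)) (-c) t := by
      simpa [Pi.neg_def] using ((hasDerivAt_id t).const_mul c).neg
    have := ((h1.exp).const_mul (a * c)).mul_const r
    refine this.congr_deriv ?_
    simp only [hkdef]; ring
  have hg2 : ∀ t, HasDerivAt (fun t => -(deriv U (h t) * k t))
      (-((deriv (deriv U) (h t) * k t) * k t + deriv U (h t) * (-(c * k t)))) t := by
    intro t
    exact ((((hUdiff2 (h t)).hasDerivAt).comp t (aux_hd a c r t)).mul (hkd t)).neg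
  apply convexOn_univ_of_deriv2_nonneg
  · exact fun t => (hg1 t).differentiableAt
  · rw [hderiv1]; exact fun t => (hg2 t).differentiableAt
  · intro t
    show 0 ≤ deriv (deriv fun t => -(U (h t))) t
    rw [hderiv1, (hg2 t).deriv]
    have h1 := hU' (h t)
    have h2 := hU'' (h t)
    have h3 := (hkpos t).le
    nlinarith [mul_nonneg (mul_nonneg (neg_nonneg.mpr h2) h3) h3,
      mul_nonneg (mul_nonneg h1 hc.le) h3]

lemma aux_g_anti (a c r : ℝ) (ha : 0 < a) (hc : 0 < c) (hr : 0 < r)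
    (U : ℝ → ℝ) (hUdiff : Differentiable ℝ U) (hU' : ∀ x, 0 ≤ deriv U x) :
    Antitone (fun t : ℝ => -(U ((1 - a * Real.exp (-(c * t))) * r))) := by
  have hUmono : Monotone U := monotone_of_deriv_nonneg hUdiff hU'
  intro s t hst
  simp only [neg_le_neg_iff]
  apply hUmono
  have : Real.exp (-(c * t)) ≤ Real.exp (-(c * s)) := by
    apply Real.exp_le_exp.mpr; nlinarith
  nlinarith [mul_nonneg (sub_nonneg.mpr (mul_le_mul_of_nonneg_left this ha.le)) hr.le]

/-- The perspective-like function `f(I,x) = -I·U((1 - a·e^{-b·x·γ/I})·r)` for `I > 0`,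
extended by `0` at `I = 0`, is jointly convex on `{(I,x) : I ≥ 0, x ≥ 0}`. -/
theorem stmt0 (a b r γ : ℝ) (ha : 0 < a) (ha1 : a ≤ 1) (hb : 0 < b) (hr : 0 < r)
    (hγ : 0 < γ) (U : ℝ → ℝ) (hUdiff : Differentiable ℝ U)
    (hUdiff2 : Differentiable ℝ (deriv U))
    (hU' : ∀ x, 0 ≤ deriv U x) (hU'' : ∀ x, deriv (deriv U) x ≤ 0) :
    ConvexOn ℝ {p : ℝ × ℝ | 0 ≤ p.1 ∧ 0 ≤ p.2}
      (fun p => if p.1 = 0 then 0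
        else -p.1 * U ((1 - a * Real.exp (-b * p.2 * γ / p.1)) * r)) := by
  have hc : (0:ℝ) < b * γ := mul_pos hb hγ
  set g : ℝ → ℝ := fun t => -(U ((1 - a * Real.exp (-(b * γ * t))) * r)) with hgdef
  have hgconv : ConvexOn ℝ Set.univ g :=
    aux_g_convex a (b * γ) r ha hc hr U hUdiff hUdiff2 hU' hU''
  have hganti : Antitone g := aux_g_anti a (b * γ) r ha hc hr U hUdiff hU'
  have hfe : ∀ I x : ℝ, -I * U ((1 - a * Real.exp (-b * x * γ / I)) * r) = I * g (x / I) := by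
    intro I x
    have e : -b * x * γ / I = -(b * γ * (x / I)) := by ring
    rw [hgdef]
    simp only [e]
    ring
  constructor
  · intro p hp q hq s t hs ht hst
    exact ⟨add_nonneg (mul_nonneg hs hp.1) (mul_nonneg ht hq.1),
      add_nonneg (mul_nonneg hs hp.2) (mul_nonneg ht hq.2)⟩
  · rintro ⟨I₁, x₁⟩ ⟨hI₁, hx₁⟩ ⟨I₂, x₂⟩ ⟨hI₂, hx₂⟩ p q hp hq hpq
    simp only at hI₁ hx₁ hI₂ hx₂
    simp only [Prod.smul_mk, Prod.mk_add_mk, smul_eq_mul]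
    by_cases hJ : p * I₁ + q * I₂ = 0
    · rw [if_pos hJ]
      have h1 : p * I₁ = 0 := by nlinarith [mul_nonneg hp hI₁, mul_nonneg hq hI₂]
      have h2 : q * I₂ = 0 := by nlinarith [mul_nonneg hp hI₁, mul_nonneg hq hI₂]
      have e1 : p * (if I₁ = 0 then (0:ℝ)
          else -I₁ * U ((1 - a * Real.exp (-b * x₁ * γ / I₁)) * r)) = 0 := by
        by_cases h : I₁ = 0
        · simp [h]
        · have : p = 0 := by
            rcases mul_eq_zero.mp h1 with h' | h'
            · exact h'
            · exact absurd h' h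
          simp [this]
      have e2 : q * (if I₂ = 0 then (0:ℝ)
          else -I₂ * U ((1 - a * Real.exp (-b * x₂ * γ / I₂)) * r)) = 0 := by
        by_cases h : I₂ = 0
        · simp [h]
        · have : q = 0 := by
            rcases mul_eq_zero.mp h2 with h' | h'
            · exact h'
            · exact absurd h' h
          simp [this]
      rw [e1, e2]; norm_num
    · rw [if_neg hJ, hfe]
      have hJpos : 0 < p * I₁ + q * I₂ :=
        lt_of_le_of_ne (add_nonneg (mul_nonneg hp hI₁) (mul_nonneg hq hI₂)) (Ne.symm hJ)
      by_cases h1 : I₁ = 0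
      · -- I₁ = 0, so J = q*I₂ > 0
        rw [if_pos h1]
        have hqI : 0 < q * I₂ := by
          rw [h1] at hJpos; simpa using hJpos
        have hI2 : (0:ℝ) < I₂ := by nlinarith
        rw [if_neg (ne_of_gt hI2), hfe]
        have hJeq : p * I₁ + q * I₂ = q * I₂ := by rw [h1]; ring
        have harg : x₂ / I₂ ≤ (p * x₁ + q * x₂) / (p * I₁ + q * I₂) := by
          rw [hJeq, div_le_div_iff₀ hI2 hqI]
          nlinarith [mul_nonneg (mul_nonneg hp hx₁) hI2.le]
        have := mul_le_mul_of_nonneg_left (hganti harg) hJpos.le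
        calc (p * I₁ + q * I₂) * g ((p * x₁ + q * x₂) / (p * I₁ + q * I₂))
            ≤ (p * I₁ + q * I₂) * g (x₂ / I₂) := this
          _ = p * 0 + q * (I₂ * g (x₂ / I₂)) := by rw [hJeq]; ring
      · by_cases h2 : I₂ = 0
        · rw [if_pos h2, if_neg h1, hfe]
          have hI1 : (0:ℝ) < I₁ := lt_of_le_of_ne hI₁ (Ne.symm h1)
          have hpI : 0 < p * I₁ := by
            rw [h2] at hJpos; simpa using hJpos
          have hJeq : p * I₁ + q * I₂ = p * I₁ := by rw [h2]; ring
          have harg : x₁ / I₁ ≤ (p * x₁ + q * x₂) / (p * I₁ + q * I₂) := by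
            rw [hJeq, div_le_div_iff₀ hI1 hpI]
            nlinarith [mul_nonneg (mul_nonneg hq hx₂) hI1.le]
          have := mul_le_mul_of_nonneg_left (hganti harg) hJpos.le
          calc (p * I₁ + q * I₂) * g ((p * x₁ + q * x₂) / (p * I₁ + q * I₂))
              ≤ (p * I₁ + q * I₂) * g (x₁ / I₁) := this
            _ = p * (I₁ * g (x₁ / I₁)) + q * 0 := by rw [hJeq]; ring
        · rw [if_neg h1, if_neg h2, hfe, hfe]
          have hI1 : (0:ℝ) < I₁ := lt_of_le_of_ne hI₁ (Ne.symm h1)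
          have hI2 : (0:ℝ) < I₂ := lt_of_le_of_ne hI₂ (Ne.symm h2)
          set J := p * I₁ + q * I₂ with hJdef
          have key := hgconv.2 (Set.mem_univ (x₁ / I₁)) (Set.mem_univ (x₂ / I₂))
            (show (0:ℝ) ≤ p * I₁ / J from by positivity)
            (show (0:ℝ) ≤ q * I₂ / J from by positivity)
            (show p * I₁ / J + q * I₂ / J = 1 from by field_simp; exact hJdef.symm)
          simp only [smul_eq_mul] at key
          have harg : p * I₁ / J * (x₁ / I₁) + q * I₂ / J * (x₂ / I₂)
              = (p * x₁ + q * x₂) / J := by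
            field_simp
          rw [harg] at key
          have := mul_le_mul_of_nonneg_left key hJpos.le
          calc J * g ((p * x₁ + q * x₂) / J)
              ≤ J * (p * I₁ / J * g (x₁ / I₁) + q * I₂ / J * g (x₂ / I₂)) := this
            _ = p * (I₁ * g (x₁ / I₁)) + q * (I₂ * g (x₂ / I₂)) := by
                field_simp
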